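/- Let q ≥ 2 and d ≥ 1, and define b_d(n) = Σ_{l≥0} ε_l(n)·ε_{l+1}(n)···ε_{l+d}(n) with base-q digits ε_l(n). Then b_d is (d+1)-recursive: for all n ≥ 1 and all (x_d,...,x_0) ∈ {0,...,q-1}^{d+1}, b_d(q^{d+1} n + Σ_{j=0}^{d} x_j q^j) = b_d(q^d n + Σ_{j=1}^{d} x_j q^{j-1}) + x_d·x_{d-1}···x_0. -/

import Mathlib

/-- The `l`-th digit of `n` in base `q`. -/
def digit (q l n : ℕ) : ℕ := n / q ^ l % q

lemma digit_zero_of_lt {q l n : ℕ} (h : n < q ^ l) : digit q l n = 0 := by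
  unfold digit
  rw [Nat.div_eq_of_lt h, Nat.zero_mod]

lemma digit_key (q : ℕ) (hq : 2 ≤ q) :
    ∀ k n (x : ℕ → ℕ), (∀ j, x j < q) → ∀ t,
      digit q t (q ^ k * n + ∑ j ∈ Finset.range k, x j * q ^ j) =
        if t < k then x t else digit q (t - k) n := by
  intro k
  induction k with
  | zero => intro n x hx t; simp [digit]
  | succ k ih =>
    intro n x hx t
    have hrw : q ^ (k + 1) * n + ∑ j ∈ Finset.range (k + 1), x j * q ^ j
        = q * (q ^ k * n + ∑ j ∈ Finset.range k, x (j + 1) * q ^ j) + x 0 := by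
      have hs : ∀ j ∈ Finset.range k, x (j + 1) * q ^ (j + 1) = q * (x (j + 1) * q ^ j) :=
        fun j _ => by ring
      rw [Finset.sum_range_succ', mul_add, Finset.mul_sum, Finset.sum_congr rfl hs]
      ring
    rw [hrw]
    cases t with
    | zero =>
      rw [if_pos (Nat.succ_pos k)]
      unfold digit
      simp [Nat.mul_add_mod, Nat.mod_eq_of_lt (hx 0)]
    | succ t =>
      have h1 : ∀ A : ℕ, digit q (t + 1) (q * A + x 0) = digit q t A := by
        intro A
        unfold digit
        rw [pow_succ, mul_comm (q ^ t) q, ← Nat.div_div_eq_div_mul]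
        congr 2
        rw [Nat.mul_add_div (by omega : 0 < q), Nat.div_eq_of_lt (hx 0), add_zero]
      rw [h1]
      have h2 := ih n (fun j => x (j + 1)) (fun j => hx _) t
      rw [h2]
      by_cases h : t < k
      · rw [if_pos h, if_pos (by omega)]
      · rw [if_neg h, if_neg (by omega)]
        congr 1
        omega

theorem stmt_17 (q d : ℕ) (hq : 2 ≤ q) (hd : 1 ≤ d)
    (b : ℕ → ℕ)
    (hb : ∀ m, b m = ∑ l ∈ Finset.range (m + 1),
        ∏ t ∈ Finset.range (d + 1), digit q (l + t) m) :
    ∀ n : ℕ, 1 ≤ n → ∀ x : Fin (d + 1) → ℕ, (∀ j, x j < q) →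
      b (q ^ (d + 1) * n + ∑ j : Fin (d + 1), x j * q ^ (j : ℕ)) =
        b (q ^ d * n + ∑ j : Fin d, x j.succ * q ^ (j : ℕ)) + ∏ j : Fin (d + 1), x j := by
  intro n hn x hx
  set x' : ℕ → ℕ := fun j => x ⟨j % (d + 1), Nat.mod_lt _ (Nat.succ_pos d)⟩ with hx'def
  have hx' : ∀ j, x' j < q := fun j => hx _
  have hx'eq : ∀ j : Fin (d + 1), x' (j : ℕ) = x j := by
    intro j
    simp only [hx'def]
    congr 1
    exact Fin.ext (Nat.mod_eq_of_lt j.isLt)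
  have hXN : (∑ j : Fin (d + 1), x j * q ^ (j : ℕ))
      = ∑ j ∈ Finset.range (d + 1), x' j * q ^ j := by
    rw [← Fin.sum_univ_eq_sum_range (fun j => x' j * q ^ j) (d + 1)]
    exact Finset.sum_congr rfl fun j _ => by rw [hx'eq]
  have hXM : (∑ j : Fin d, x j.succ * q ^ (j : ℕ))
      = ∑ j ∈ Finset.range d, x' (j + 1) * q ^ j := by
    rw [← Fin.sum_univ_eq_sum_range (fun j => x' (j + 1) * q ^ j) d]
    apply Finset.sum_congr rfl
    intro j _
    have : x' ((j : ℕ) + 1) = x j.succ := by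
      have := hx'eq j.succ
      simpa using this
    rw [this]
  have hPX : (∏ j : Fin (d + 1), x j) = ∏ j ∈ Finset.range (d + 1), x' j := by
    rw [← Fin.prod_univ_eq_prod_range x' (d + 1)]
    exact Finset.prod_congr rfl fun j _ => (hx'eq j).symm
  rw [hXN, hXM, hPX, hb, hb]
  set N := q ^ (d + 1) * n + ∑ j ∈ Finset.range (d + 1), x' j * q ^ j with hNdef
  set M := q ^ d * n + ∑ j ∈ Finset.range d, x' (j + 1) * q ^ j with hMdef
  have hdN : ∀ t, digit q t N = if t < d + 1 then x' t else digit q (t - (d + 1)) n :=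
    digit_key q hq (d + 1) n x' hx'
  have hdM : ∀ t, digit q t M = if t < d then x' (t + 1) else digit q (t - d) n :=
    digit_key q hq d n (fun j => x' (j + 1)) (fun j => hx' _)
  have hNM : N = q * M + x' 0 := by
    have hs : ∀ j ∈ Finset.range d, x' (j + 1) * q ^ (j + 1) = q * (x' (j + 1) * q ^ j) :=
      fun j _ => by ring
    rw [hNdef, hMdef, Finset.sum_range_succ', mul_add, Finset.mul_sum,
      Finset.sum_congr rfl hs]
    ring
  have hM1 : 1 ≤ M := by
    have h1 : 0 < q ^ d * n := Nat.mul_pos (pow_pos (by omega) d) hn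
    omega
  have hMN : M + 1 ≤ N := by
    have h2 : 2 * M ≤ q * M := Nat.mul_le_mul_right M hq
    omega
  have hQP : ∀ l, (∏ t ∈ Finset.range (d + 1), digit q (l + 1 + t) N)
      = ∏ t ∈ Finset.range (d + 1), digit q (l + t) M := by
    intro l
    apply Finset.prod_congr rfl
    intro t _
    rw [hdN, hdM]
    by_cases h : l + t < d
    · rw [if_pos (by omega), if_pos h]
      congr 1
      omega
    · rw [if_neg (by omega), if_neg h]
      congr 1
      omega
  have hQ0 : ∀ l, M + 1 ≤ l → (∏ t ∈ Finset.range (d + 1), digit q (l + t) M) = 0 := by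
    intro l hl
    apply Finset.prod_eq_zero (Finset.mem_range.2 (Nat.succ_pos d))
    have h2 : l < 2 ^ l := Nat.lt_two_pow_self
    have h3 : 2 ^ l ≤ q ^ l := Nat.pow_le_pow_left hq l
    have hM : M < q ^ (l + 0) := by rw [add_zero]; omega
    exact digit_zero_of_lt hM
  rw [Finset.sum_range_succ' (fun l => ∏ t ∈ Finset.range (d + 1), digit q (l + t) N) N]
  congr 1
  · calc (∑ l ∈ Finset.range N, ∏ t ∈ Finset.range (d + 1), digit q (l + 1 + t) N)
        = ∑ l ∈ Finset.range N, ∏ t ∈ Finset.range (d + 1), digit q (l + t) M :=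
          Finset.sum_congr rfl fun l _ => hQP l
      _ = ∑ l ∈ Finset.range (M + 1), ∏ t ∈ Finset.range (d + 1), digit q (l + t) M :=
          (Finset.sum_subset (Finset.range_subset_range.2 hMN)
            (fun l _ hl => hQ0 l (by simp only [Finset.mem_range, not_lt] at hl; exact hl))).symm
  · apply Finset.prod_congr rfl
    intro t ht
    rw [zero_add, hdN, if_pos (Finset.mem_range.1 ht)]
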